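/- Let K be a linearly ordered field and H a K-vector space with a symmetric bilinear form ⟨·,·⟩ that is positive definite (⟨x,x⟩ > 0 for all x ≠ 0), such that every nonzero x ∈ H has a scalar multiple w with ⟨w,w⟩ = 1 and there exist u, v ∈ H with ⟨u,u⟩ = ⟨v,v⟩ = 1 and ⟨u,v⟩ = 0. Call α ∈ K infinitesimal if |α| < 1/n for every positive integer n, and finite if |α| < n for some positive integer n; call x ∈ H infinitesimal (resp. finite) if ⟨x,x⟩ is. For nonzero x, y ∈ H define x ≈ y if there are α, β ∈ K such that αx and βy are finite and not infinitesimal and αx − βy is infinitesimal. Then: (i) ≈ is reflexive, symmetric and transitive on the nonzero vectors of H, and (for all nonzero x, y: x ≈ y implies y is a scalar multiple of x) holds if and only if K is Archimedean, i.e., 0 is the only infinitesimal element of K; (ii) if x, y are nonzero with ⟨x,y⟩ = 0, then x ≈ y fails; (iii) for every linear bijection U of H with ⟨Ux,Uy⟩ = ⟨x,y⟩ for all x,y, and all nonzero x, y ∈ H: x ≈ y if and only if Ux ≈ Uy. -/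

import Mathlib

/-- An element of an ordered field is infinitesimal if its absolute value is
below `1/n` for every positive integer `n`. -/
def Infml {K : Type*} [Field K] [LinearOrder K] [IsStrictOrderedRing K] (α : K) : Prop :=
  ∀ n : ℕ, 0 < n → |α| < 1 / (n : K)

/-- An element of an ordered field is finite if its absolute value is below
some positive integer `n`. -/
def Finl {K : Type*} [Field K] [LinearOrder K] [IsStrictOrderedRing K] (α : K) : Prop :=
  ∃ n : ℕ, 0 < n ∧ |α| < (n : K)

/-- `x ≈ y`: some scalar multiples of `x` and `y` are finite, not
infinitesimal, and differ by an infinitesimal vector (lengths measured by the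
form `B`). -/
def ApproxRel {K : Type*} [Field K] [LinearOrder K] [IsStrictOrderedRing K] {H : Type*} [AddCommGroup H]
    [Module K H] (B : H → H → K) (x y : H) : Prop :=
  ∃ α β : K,
    (Finl (B (α • x) (α • x)) ∧ ¬ Infml (B (α • x) (α • x))) ∧
    (Finl (B (β • y) (β • y)) ∧ ¬ Infml (B (β • y) (β • y))) ∧
    Infml (B (α • x - β • y) (α • x - β • y))

section MyHelpers
variable {K : Type*} [Field K] [LinearOrder K] [IsStrictOrderedRing K]

lemma my_infml_zero : Infml (0:K) := by
  intro n hn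
  have h : (0:K) < n := by exact_mod_cast hn
  simpa using one_div_pos.mpr h

lemma my_not_infml_one : ¬ Infml (1:K) := by
  intro h
  have := h 1 one_pos
  norm_num at this

lemma my_finl_one : Finl (1:K) := ⟨2, by norm_num, by norm_num⟩

lemma my_finl_two : Finl (2:K) := ⟨3, by norm_num, by norm_num⟩

lemma my_infml_mono {a b : K} (h : |a| ≤ |b|) (hb : Infml b) : Infml a :=
  fun n hn => lt_of_le_of_lt h (hb n hn)

lemma my_infml_neg {a : K} (h : Infml a) : Infml (-a) :=
  my_infml_mono (by rw [abs_neg]) h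

lemma my_infml_add {a b : K} (ha : Infml a) (hb : Infml b) : Infml (a + b) := by
  intro n hn
  have h2 : 0 < 2 * n := by omega
  have ha' := ha (2*n) h2
  have hb' := hb (2*n) h2
  have hn' : (0:K) < n := by exact_mod_cast hn
  have hcast : ((2*n : ℕ):K) = 2 * n := by push_cast; ring
  rw [hcast] at ha' hb'
  calc |a + b| ≤ |a| + |b| := abs_add_le _ _
    _ < 1/(2*(n:K)) + 1/(2*(n:K)) := add_lt_add ha' hb'
    _ = 1/(n:K) := by
      field_simp
      norm_num

lemma my_finl_of_infml {a : K} (h : Infml a) : Finl a :=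
  ⟨1, one_pos, by simpa using h 1 one_pos⟩

lemma my_finl_add {a b : K} (ha : Finl a) (hb : Finl b) : Finl (a + b) := by
  obtain ⟨n, hn, han⟩ := ha
  obtain ⟨m, hm, hbm⟩ := hb
  refine ⟨n + m, by omega, ?_⟩
  have hcast : ((n+m:ℕ):K) = n + m := by push_cast; ring
  rw [hcast]
  calc |a+b| ≤ |a| + |b| := abs_add_le _ _
    _ < n + m := add_lt_add han hbm

lemma my_infml_mul_finl {a b : K} (ha : Finl a) (hb : Infml b) : Infml (a * b) := by
  obtain ⟨m, hm, ham⟩ := ha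
  intro n hn
  have hb' := hb (m*n) (Nat.mul_pos hm hn)
  have hmK : (0:K) < m := by exact_mod_cast hm
  have hnK : (0:K) < n := by exact_mod_cast hn
  have hcast : ((m*n:ℕ):K) = (m:K)*n := by push_cast; ring
  rw [hcast] at hb'
  rw [abs_mul]
  calc |a| * |b| < m * (1/((m:K)*n)) := mul_lt_mul'' ham hb' (abs_nonneg _) (abs_nonneg _)
    _ = 1/(n:K) := by field_simp

lemma my_infml_of_sq {a : K} (h : Infml (a * a)) : Infml a := by
  intro n hn
  by_contra hc
  push_neg at hc
  have h' := h (n*n) (Nat.mul_pos hn hn)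
  rw [abs_mul] at h'
  have hnK : (0:K) < n := by exact_mod_cast hn
  have hcast : ((n*n:ℕ):K) = (n:K)*(n:K) := by push_cast; ring
  rw [hcast] at h'
  have heq : (1:K)/((n:K)*(n:K)) = 1/(n:K) * (1/(n:K)) := by rw [one_div_mul_one_div]
  have hle : 1/(n:K) * (1/(n:K)) ≤ |a| * |a| :=
    mul_le_mul hc hc (one_div_pos.mpr hnK).le (abs_nonneg _)
  rw [heq] at h'
  linarith

lemma my_finl_of_sq {a : K} (h : Finl (a * a)) : Finl a := by
  obtain ⟨N, hN, hN'⟩ := h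
  refine ⟨N + 1, by omega, ?_⟩
  have hcast : ((N+1:ℕ):K) = (N:K) + 1 := by push_cast; ring
  rw [hcast]
  rw [abs_mul] at hN'
  rcases le_or_gt 1 |a| with h1 | h1
  · have : |a| ≤ |a| * |a| := le_mul_of_one_le_left (abs_nonneg _) h1
    linarith
  · have hN1 : (1:K) ≤ N := by exact_mod_cast Nat.one_le_iff_ne_zero.mpr hN.ne'
    linarith

lemma my_finl_div {a b : K} (ha : Finl a) (hb : ¬ Infml b) : Finl (a / b) := by
  obtain ⟨N, hN, haN⟩ := ha
  unfold Infml at hb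
  push_neg at hb
  obtain ⟨m, hm, hbm⟩ := hb
  have hmK : (0:K) < m := by exact_mod_cast hm
  have hNK : (0:K) < N := by exact_mod_cast hN
  have hb0 : (0:K) < |b| := lt_of_lt_of_le (one_div_pos.mpr hmK) hbm
  refine ⟨N*m, Nat.mul_pos hN hm, ?_⟩
  have hcast : ((N*m:ℕ):K) = (N:K)*m := by push_cast; ring
  rw [hcast, abs_div, div_lt_iff₀ hb0]
  have h1 : (1:K) ≤ m * |b| := by
    have := (div_le_iff₀' hmK).mp hbm
    linarith
  nlinarith [haN, h1, hNK, abs_nonneg a]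

end MyHelpers

theorem stmt_19 {K : Type*} [Field K] [LinearOrder K] [IsStrictOrderedRing K] {H : Type*} [AddCommGroup H]
    [Module K H] (B : H → H → K)
    (haddl : ∀ x y z : H, B (x + y) z = B x z + B y z)
    (hsmull : ∀ (a : K) (x y : H), B (a • x) y = a * B x y)
    (hsymm : ∀ x y : H, B x y = B y x)
    (hpos : ∀ x : H, x ≠ 0 → 0 < B x x)
    (hunit : ∀ x : H, x ≠ 0 → ∃ α : K, B (α • x) (α • x) = 1)
    (hpair : ∃ u v : H, B u u = 1 ∧ B v v = 1 ∧ B u v = 0) :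
    -- (i)
    ((∀ x : H, x ≠ 0 → ApproxRel B x x) ∧
     (∀ x y : H, x ≠ 0 → y ≠ 0 → ApproxRel B x y → ApproxRel B y x) ∧
     (∀ x y z : H, x ≠ 0 → y ≠ 0 → z ≠ 0 →
       ApproxRel B x y → ApproxRel B y z → ApproxRel B x z) ∧
     ((∀ x y : H, x ≠ 0 → y ≠ 0 → ApproxRel B x y → ∃ c : K, y = c • x) ↔
       (∀ α : K, Infml α → α = 0))) ∧
    -- (ii)
    (∀ x y : H, x ≠ 0 → y ≠ 0 → B x y = 0 → ¬ ApproxRel B x y) ∧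
    -- (iii)
    (∀ U : H →ₗ[K] H, Function.Bijective U →
      (∀ x y : H, B (U x) (U y) = B x y) →
      ∀ x y : H, x ≠ 0 → y ≠ 0 → (ApproxRel B x y ↔ ApproxRel B (U x) (U y))) := by
  -- basic consequences of bilinearity & symmetry
  have hB0 : ∀ z : H, B 0 z = 0 := fun z => by simpa using hsmull 0 z z
  have hB0' : ∀ z : H, B z 0 = 0 := fun z => (hsymm z 0).trans (hB0 z)
  have haddr : ∀ x y z : H, B x (y + z) = B x y + B x z := fun x y z => by
    rw [hsymm, haddl, hsymm y x, hsymm z x]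
  have hsmulr : ∀ (a : K) (x y : H), B x (a • y) = a * B x y := fun a x y => by
    rw [hsymm, hsmull, hsymm y x]
  have hBneg : ∀ w z : H, B (-w) (-z) = B w z := fun w z => by
    rw [← neg_one_smul K w, ← neg_one_smul K z, hsmull, hsmulr]; ring
  have hnegr : ∀ w z : H, B w (-z) = -B w z := fun w z => by
    rw [← neg_one_smul K z, hsmulr]; ring
  have expand_add : ∀ w z : H, B (w + z) (w + z) = B w w + 2 * B w z + B z z := by
    intro w z
    rw [haddl, haddr, haddr, hsymm z w]; ring
  have expand_sub : ∀ w z : H, B (w - z) (w - z) = B w w - 2 * B w z + B z z := by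
    intro w z
    rw [sub_eq_add_neg, expand_add, hnegr, hBneg]; ring
  have hnonneg : ∀ w : H, 0 ≤ B w w := by
    intro w
    rcases eq_or_ne w 0 with rfl | h
    · rw [hB0]
    · exact (hpos w h).le
  -- Cauchy–Schwarz
  have hCS : ∀ w z : H, B w z * B w z ≤ B w w * B z z := by
    intro w z
    rcases eq_or_ne z 0 with rfl | hz
    · simp [hB0', hB0]
    · have hzz := hpos z hz
      have ht : B w z / B z z * B z z = B w z := div_mul_cancel₀ _ hzz.ne'
      have h := hnonneg (w - (B w z / B z z) • z)
      rw [expand_sub] at h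
      simp only [hsmull, hsmulr] at h
      have htsq : (B w z / B z z * B z z - B w z) * (B w z / B z z * B z z - B w z) = 0 := by
        rw [ht]; ring
      nlinarith [mul_nonneg h hzz.le, htsq]
  have cross : ∀ a b : H, Finl (B a a) → Infml (B b b) → Infml (B a b) := by
    intro a b hfa hib
    apply my_infml_of_sq
    apply my_infml_mono (b := B a a * B b b)
    · rw [abs_mul_self, abs_of_nonneg (mul_nonneg (hnonneg a) (hnonneg b))]
      exact hCS a b
    · exact my_infml_mul_finl hfa hib
  have sum_i : ∀ a b : H, Infml (B a a) → Infml (B b b) → Infml (B (a + b) (a + b)) := by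
    intro a b ha hb
    rw [expand_add]
    exact my_infml_add (my_infml_add ha
      (my_infml_mul_finl my_finl_two (cross a b (my_finl_of_infml ha) hb))) hb
  refine ⟨⟨?_, ?_, ?_, ?_⟩, ?_, ?_⟩
  -- reflexivity
  · intro x hx
    obtain ⟨α, hα⟩ := hunit x hx
    refine ⟨α, α, ⟨?_, ?_⟩, ⟨?_, ?_⟩, ?_⟩
    · rw [hα]; exact my_finl_one
    · rw [hα]; exact my_not_infml_one
    · rw [hα]; exact my_finl_one
    · rw [hα]; exact my_not_infml_one
    · rw [sub_self, hB0]; exact my_infml_zero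
  -- symmetry
  · rintro x y hx hy ⟨α, β, h1, h2, h3⟩
    refine ⟨β, α, h2, h1, ?_⟩
    have h : β • y - α • x = -(α • x - β • y) := (neg_sub _ _).symm
    rw [h, hBneg]
    exact h3
  -- transitivity
  · rintro x y z hx hy hz ⟨α₁, β₁, ⟨hfx, hnx⟩, ⟨hfy1, hny1⟩, hd1⟩
      ⟨α₂, β₂, ⟨hfy2, hny2⟩, ⟨hfz, hnz⟩, hd2⟩
    have hα₂ : α₂ ≠ 0 := by
      rintro rfl
      exact hny2 (by rw [zero_smul, hB0]; exact my_infml_zero)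
    set c : K := β₁ / α₂ with hcdef
    have hcy : c • (α₂ • y) = β₁ • y := by
      rw [smul_smul, div_mul_cancel₀ _ hα₂]
    have hBy'' : B (α₂ • y) (α₂ • y) ≠ 0 := fun h =>
      hny2 (by rw [h]; exact my_infml_zero)
    have hcc : c * c * B (α₂ • y) (α₂ • y) = B (β₁ • y) (β₁ • y) := by
      rw [← hcy]
      simp only [hsmull, hsmulr]
      ring
    have hfc2 : Finl (c * c) := by
      have h : c * c = B (β₁ • y) (β₁ • y) / B (α₂ • y) (α₂ • y) := by
        rw [eq_div_iff hBy'']; exact hcc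
      rw [h]
      exact my_finl_div hfy1 hny2
    have hδ : Infml (B (β₂ • z) (β₂ • z) - B (α₂ • y) (α₂ • y)) := by
      have h1 : β₂ • z = α₂ • y - (α₂ • y - β₂ • z) := by abel
      have h2 : B (β₂ • z) (β₂ • z) - B (α₂ • y) (α₂ • y) =
          -(2 * B (α₂ • y) (α₂ • y - β₂ • z)) +
            B (α₂ • y - β₂ • z) (α₂ • y - β₂ • z) := by
        conv_lhs => rw [h1]
        rw [expand_sub]; ring
      rw [h2]
      exact my_infml_add
        (my_infml_neg (my_infml_mul_finl my_finl_two (cross _ _ hfy2 hd2))) hd2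
    have hinfδc : Infml ((c * c) * (B (β₂ • z) (β₂ • z) - B (α₂ • y) (α₂ • y))) :=
      my_infml_mul_finl hfc2 hδ
    have hBβz : B ((c * β₂) • z) ((c * β₂) • z) =
        B (β₁ • y) (β₁ • y) + (c * c) * (B (β₂ • z) (β₂ • z) - B (α₂ • y) (α₂ • y)) := by
      rw [← hcc, mul_smul]
      simp only [hsmull, hsmulr]
      ring
    refine ⟨α₁, c * β₂, ⟨hfx, hnx⟩, ⟨?_, ?_⟩, ?_⟩
    · rw [hBβz]
      exact my_finl_add hfy1 (my_finl_of_infml hinfδc)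
    · rw [hBβz]
      intro h
      apply hny1
      have h2 : B (β₁ • y) (β₁ • y) =
          (B (β₁ • y) (β₁ • y) + (c * c) * (B (β₂ • z) (β₂ • z) - B (α₂ • y) (α₂ • y))) +
            -((c * c) * (B (β₂ • z) (β₂ • z) - B (α₂ • y) (α₂ • y))) := by ring
      rw [h2]
      exact my_infml_add h (my_infml_neg hinfδc)
    · have hre : α₁ • x - (c * β₂) • z = (α₁ • x - β₁ • y) + c • (α₂ • y - β₂ • z) := by
        rw [smul_sub, hcy, mul_smul]; abel
      rw [hre]
      apply sum_i _ _ hd1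
      have h : B (c • (α₂ • y - β₂ • z)) (c • (α₂ • y - β₂ • z)) =
          (c * c) * B (α₂ • y - β₂ • z) (α₂ • y - β₂ • z) := by
        simp only [hsmull, hsmulr]; ring
      rw [h]
      exact my_infml_mul_finl hfc2 hd2
  -- iff with Archimedean
  · constructor
    · intro hsc ε hε
      by_contra hne
      obtain ⟨u, v, huu, hvv, huv⟩ := hpair
      have hu : u ≠ 0 := by
        intro h0
        rw [h0, hB0] at huu
        exact one_ne_zero huu.symm
      have hε1 : |ε| < 1 := by simpa using hε 1 one_pos
      have hεε : ε * ε < 1 := by nlinarith [abs_nonneg ε, abs_mul_abs_self ε]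
      have hBy : B (u + ε • v) (u + ε • v) = 1 + ε * ε := by
        rw [expand_add]
        simp only [hsmull, hsmulr]
        rw [huu, hvv, huv]; ring
      have hy : u + ε • v ≠ 0 := by
        intro h0
        rw [h0, hB0] at hBy
        nlinarith [mul_self_nonneg ε]
      have happ : ApproxRel B u (u + ε • v) := by
        refine ⟨1, 1, ⟨?_, ?_⟩, ⟨?_, ?_⟩, ?_⟩
        · rw [one_smul, huu]; exact my_finl_one
        · rw [one_smul, huu]; exact my_not_infml_one
        · rw [one_smul, hBy]
          exact ⟨2, by norm_num, by
            rw [abs_of_nonneg (by nlinarith [mul_self_nonneg ε])]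
            push_cast; nlinarith⟩
        · rw [one_smul, hBy]
          intro h
          have := h 1 one_pos
          rw [abs_of_nonneg (by nlinarith [mul_self_nonneg ε])] at this
          norm_num at this
          nlinarith [mul_self_nonneg ε]
        · rw [one_smul, one_smul]
          have h : u - (u + ε • v) = -(ε • v) := by abel
          rw [h, hBneg]
          simp only [hsmull, hsmulr]
          rw [hvv, mul_one]
          exact my_infml_mul_finl (my_finl_of_infml hε) hε
      obtain ⟨c, hcq⟩ := hsc u (u + ε • v) hu hy happ
      have h1 : B (u + ε • v) v = ε := by
        rw [haddl, hsmull, huv, hvv]; ring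
      have h2 : B (c • u) v = 0 := by rw [hsmull, huv, mul_zero]
      rw [hcq] at h1
      exact hne (by rw [← h1, h2])
    · rintro harch x y hx hy ⟨α, β, ⟨hfa, hna⟩, ⟨hfb, hnb⟩, hd⟩
      have hβ : β ≠ 0 := by
        rintro rfl
        exact hnb (by rw [zero_smul, hB0]; exact my_infml_zero)
      have h0 : α • x - β • y = 0 := by
        by_contra h
        exact (hpos _ h).ne' (harch _ hd)
      have heq : β • y = α • x := (sub_eq_zero.mp h0).symm
      refine ⟨β⁻¹ * α, ?_⟩
      rw [mul_smul, ← heq, inv_smul_smul₀ hβ]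
  -- (ii)
  · rintro x y hx hy hxy ⟨α, β, ⟨hfa, hna⟩, ⟨hfb, hnb⟩, hd⟩
    have h1 : B (α • x) (β • y) = 0 := by rw [hsmull, hsmulr, hxy]; ring
    have hexp : B (α • x - β • y) (α • x - β • y) = B (α • x) (α • x) + B (β • y) (β • y) := by
      rw [expand_sub, h1]; ring
    rw [hexp] at hd
    apply hna
    apply my_infml_mono (b := B (α • x) (α • x) + B (β • y) (β • y)) _ hd
    rw [abs_of_nonneg (hnonneg _), abs_of_nonneg (add_nonneg (hnonneg _) (hnonneg _))]
    linarith [hnonneg (β • y)]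
  -- (iii)
  · intro U hbij hiso x y hx hy
    have key : ∀ (a : K) (w : H), B (a • U w) (a • U w) = B (a • w) (a • w) := by
      intro a w
      rw [← map_smul, hiso]
    have key2 : ∀ (a b : K) (w z : H),
        B (a • U w - b • U z) (a • U w - b • U z) = B (a • w - b • z) (a • w - b • z) := by
      intro a b w z
      rw [← map_smul, ← map_smul, ← map_sub, hiso]
    constructor
    · rintro ⟨α, β, h1, h2, h3⟩
      refine ⟨α, β, ?_, ?_, ?_⟩
      · rw [key]; exact h1
      · rw [key]; exact h2
      · rw [key2]; exact h3
    · rintro ⟨α, β, h1, h2, h3⟩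
      refine ⟨α, β, ?_, ?_, ?_⟩
      · rw [← key]; exact h1
      · rw [← key]; exact h2
      · rw [← key2]; exact h3
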